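/- Fix any sign configuration ξ : ℤ²_e → {−1,+1}, a time j ∈ ℤ and u ≤ v with (j,u),(j,v) ∈ ℤ²_e, and define the backward paths r_k^± and meeting times T_k as in the context. Then for every k ≥ 0 there exists a function s : {i ∈ ℤ : i ≤ j} → ℤ with s(i−1) − s(i) ∈ {−1,+1} for all i ≤ j, such that r_{k+1}^+(i) = s(i) − min_{l∈{i,…,j}} ( s(l) − r_k^+(l+1) − 1 ) holds for all i with T_k ≤ i ≤ j, with the convention r_k^+(j+1) = v. -/

import Mathlib

noncomputable section

/-- Backward (dual) random walk web path started at `(i,n)`, after `k` backward steps. -/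
def Ybwd (ξ : ℤ × ℤ → ℤ) (i n : ℤ) : ℕ → ℤ
  | 0 => n
  | k + 1 => Ybwd ξ i n k - ξ (i - k - 1, Ybwd ξ i n k)

/-- `Yb ξ i n j` is the position at time `j ≤ i` of the backward random walk web
path `Ŷ_{(i,n)}`; it satisfies `Ŷ(i) = n` and `Ŷ(j-1) = Ŷ(j) - ξ(j-1, Ŷ(j))`. -/
def Yb (ξ : ℤ × ℤ → ℤ) (i n j : ℤ) : ℤ := Ybwd ξ i n (i - j).toNat

/-- The upper boundary paths `r_k^+`: `r_0^+ = Ŷ_{(j,v+1)}` and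
`r_{k+1}^+(i) = max_{l ∈ {i,…,j}} Ŷ_{(l, r_k^+(l+1)+1)}(i)`, with the
convention `r_k^+(j+1) = v`. -/
def rUp (ξ : ℤ × ℤ → ℤ) (j v : ℤ) : ℕ → ℤ → ℤ
  | 0 => fun i => Yb ξ j (v + 1) i
  | k + 1 => fun i =>
      sSup {x : ℤ | ∃ l : ℤ, i ≤ l ∧ l ≤ j ∧
        x = Yb ξ l ((if l = j then v else rUp ξ j v k (l + 1)) + 1) i}

/-- The lower boundary paths `r_k^-`: `r_0^- = Ŷ_{(j,u-1)}` and
`r_{k+1}^-(i) = min_{l ∈ {i,…,j}} Ŷ_{(l, r_k^-(l+1)-1)}(i)`, with the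
convention `r_k^-(j+1) = u`. -/
def rDown (ξ : ℤ × ℤ → ℤ) (j u : ℤ) : ℕ → ℤ → ℤ
  | 0 => fun i => Yb ξ j (u - 1) i
  | k + 1 => fun i =>
      sInf {x : ℤ | ∃ l : ℤ, i ≤ l ∧ l ≤ j ∧
        x = Yb ξ l ((if l = j then u else rDown ξ j u k (l + 1)) - 1) i}

/-- The meeting times `T_k` of the boundary paths `r_k^+` and `r_k^-`. -/
def Tmeet (ξ : ℤ × ℤ → ℤ) (j u v : ℤ) : ℕ → ℤ
  | 0 => sSup {i : ℤ | i ≤ j ∧ rUp ξ j v 0 i = rDown ξ j u 0 i}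
  | k + 1 => sSup {i : ℤ | i ≤ Tmeet ξ j u v k ∧ rUp ξ j v (k + 1) i = rDown ξ j u (k + 1) i}

namespace SkorokhodAux

lemma Yb_self (ξ : ℤ × ℤ → ℤ) (l n : ℤ) : Yb ξ l n l = n := by
  simp [Yb, Ybwd]

lemma Yb_step (ξ : ℤ × ℤ → ℤ) (l n i : ℤ) (h : i ≤ l) :
    Yb ξ l n (i - 1) = Yb ξ l n i - ξ (i - 1, Yb ξ l n i) := by
  have h1 : (l - (i - 1)).toNat = (l - i).toNat + 1 := by omega
  have h2 : l - ((l - i).toNat : ℤ) - 1 = i - 1 := by omega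
  simp only [Yb, h1, Ybwd, h2]

lemma Yb_parity (ξ : ℤ × ℤ → ℤ) (hξ : ∀ z, ξ z = 1 ∨ ξ z = -1) (l n i : ℤ)
    (h : Odd (n + l)) (hil : i ≤ l) : Odd (Yb ξ l n i + i) := by
  have key : ∀ m : ℕ, Odd (Ybwd ξ l n m + (l - m)) := by
    intro m
    induction m with
    | zero => simpa [Ybwd] using h
    | succ m ih =>
      rw [Int.odd_iff] at ih ⊢
      rw [Ybwd]
      rcases hξ (l - m - 1, Ybwd ξ l n m) with h1 | h1 <;> rw [h1] <;> push_cast <;> omega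
  have := key (l - i).toNat
  rw [show l - ((l - i).toNat : ℤ) = i from by omega] at this
  exact this

lemma step_mono (ξ : ℤ × ℤ → ℤ) (hξ : ∀ z, ξ z = 1 ∨ ξ z = -1) (p y y' i : ℤ)
    (hy : Odd (y + i)) (hy' : Odd (y' + i)) (h : y' ≤ y) :
    y' - ξ (p, y') ≤ y - ξ (p, y) := by
  rcases eq_or_lt_of_le h with rfl | h
  · rfl
  · rcases hξ (p, y) with h1 | h1 <;> rcases hξ (p, y') with h2 | h2 <;>
      rw [Int.odd_iff] at hy hy' <;> omega

/-- The family of sets whose suprema define `r_{k+1}^+`. -/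
def Sset (ξ : ℤ × ℤ → ℤ) (j : ℤ) (g : ℤ → ℤ) (i : ℤ) : Set ℤ :=
  {x : ℤ | ∃ l : ℤ, i ≤ l ∧ l ≤ j ∧ x = Yb ξ l (g l + 1) i}

lemma Sset_finite (ξ : ℤ × ℤ → ℤ) (j : ℤ) (g : ℤ → ℤ) (i : ℤ) :
    (Sset ξ j g i).Finite := by
  apply Set.Finite.subset ((Set.finite_Icc i j).image (fun l => Yb ξ l (g l + 1) i))
  rintro x ⟨l, h1, h2, rfl⟩
  exact ⟨l, ⟨h1, h2⟩, rfl⟩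

lemma Sset_nonempty (ξ : ℤ × ℤ → ℤ) (j : ℤ) (g : ℤ → ℤ) (i : ℤ) (h : i ≤ j) :
    (Sset ξ j g i).Nonempty :=
  ⟨Yb ξ i (g i + 1) i, i, le_refl i, h, rfl⟩

lemma Sset_parity (ξ : ℤ × ℤ → ℤ) (hξ : ∀ z, ξ z = 1 ∨ ξ z = -1) (j : ℤ) (g : ℤ → ℤ)
    (hg : ∀ l, l ≤ j → Odd (g l + 1 + l)) (i x : ℤ) (hx : x ∈ Sset ξ j g i) :
    Odd (x + i) := by
  obtain ⟨l, h1, h2, rfl⟩ := hx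
  exact Yb_parity ξ hξ l _ i (hg l h2) h1

lemma Sset_step (ξ : ℤ × ℤ → ℤ) (j : ℤ) (g : ℤ → ℤ) (i : ℤ) (h : i ≤ j) :
    Sset ξ j g (i - 1) =
      insert (g (i - 1) + 1) ((fun y => y - ξ (i - 1, y)) '' Sset ξ j g i) := by
  ext x
  simp only [Set.mem_insert_iff, Set.mem_image]
  constructor
  · rintro ⟨l, h1, h2, rfl⟩
    rcases eq_or_lt_of_le h1 with rfl | h1
    · left; exact Yb_self ξ _ _
    · right
      exact ⟨Yb ξ l (g l + 1) i, ⟨l, by omega, h2, rfl⟩, (Yb_step ξ l _ i (by omega)).symm⟩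
  · rintro (rfl | ⟨y, ⟨l, h1, h2, rfl⟩, rfl⟩)
    · exact ⟨i - 1, le_refl _, by omega, (Yb_self ξ _ _).symm⟩
    · exact ⟨l, by omega, h2, (Yb_step ξ l _ i h1).symm⟩

lemma sSup_Sset_step (ξ : ℤ × ℤ → ℤ) (hξ : ∀ z, ξ z = 1 ∨ ξ z = -1) (j : ℤ) (g : ℤ → ℤ)
    (hg : ∀ l, l ≤ j → Odd (g l + 1 + l)) (i : ℤ) (h : i ≤ j) :
    sSup (Sset ξ j g (i - 1)) =
      max (g (i - 1) + 1) (sSup (Sset ξ j g i) - ξ (i - 1, sSup (Sset ξ j g i))) := by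
  have hne : (Sset ξ j g i).Nonempty := Sset_nonempty ξ j g i h
  have hbdd : BddAbove (Sset ξ j g i) := (Sset_finite ξ j g i).bddAbove
  have hmem : sSup (Sset ξ j g i) ∈ Sset ξ j g i := hne.csSup_mem (Sset_finite ξ j g i)
  have hne' : (Sset ξ j g (i - 1)).Nonempty := Sset_nonempty ξ j g (i - 1) (by omega)
  have hbdd' : BddAbove (Sset ξ j g (i - 1)) := (Sset_finite ξ j g (i - 1)).bddAbove
  apply le_antisymm
  · apply csSup_le hne'
    intro x hx
    rw [Sset_step ξ j g i h] at hx
    rcases hx with rfl | ⟨y, hy, rfl⟩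
    · exact le_max_left _ _
    · refine le_trans ?_ (le_max_right _ _)
      exact step_mono ξ hξ _ _ _ i (Sset_parity ξ hξ j g hg i _ hmem)
        (Sset_parity ξ hξ j g hg i _ hy) (le_csSup hbdd hy)
  · apply max_le
    · apply le_csSup hbdd'
      rw [Sset_step ξ j g i h]
      exact Set.mem_insert _ _
    · apply le_csSup hbdd'
      rw [Sset_step ξ j g i h]
      exact Set.mem_insert_of_mem _ ⟨_, hmem, rfl⟩

lemma rUp_parity (ξ : ℤ × ℤ → ℤ) (hξ : ∀ z, ξ z = 1 ∨ ξ z = -1) (j v : ℤ)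
    (hv : Even (j + v)) : ∀ k : ℕ, ∀ i : ℤ, i ≤ j → Odd (rUp ξ j v k i + i) := by
  intro k
  induction k with
  | zero =>
    intro i hij
    have : Odd (v + 1 + j) := by
      rcases hv with ⟨t, ht⟩
      exact ⟨t, by omega⟩
    exact Yb_parity ξ hξ j (v + 1) i this hij
  | succ k ih =>
    intro i hij
    set g : ℤ → ℤ := fun l => if l = j then v else rUp ξ j v k (l + 1) with hgdef
    have hg : ∀ l, l ≤ j → Odd (g l + 1 + l) := by
      intro l hl
      rcases eq_or_lt_of_le hl with rfl | hl'
      · simp only [hgdef, if_pos rfl]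
        rcases hv with ⟨t, ht⟩
        exact ⟨t, by omega⟩
      · simp only [hgdef, if_neg (by omega : l ≠ j)]
        obtain ⟨t, ht⟩ := ih (l + 1) (by omega)
        exact ⟨t, by omega⟩
    have heq : rUp ξ j v (k + 1) i = sSup (Sset ξ j g i) := rfl
    rw [heq]
    have hmem : sSup (Sset ξ j g i) ∈ Sset ξ j g i :=
      (Sset_nonempty ξ j g i hij).csSup_mem (Sset_finite ξ j g i)
    exact Sset_parity ξ hξ j g hg i _ hmem

/-- The reflecting walk `s` in the Skorokhod representation: it starts at `v+1`
at time `j` and follows the increments of the environment along `r_{k+1}^+`. -/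
def sAux (ξ : ℤ × ℤ → ℤ) (j v : ℤ) (k : ℕ) : ℕ → ℤ
  | 0 => v + 1
  | m + 1 => sAux ξ j v k m - ξ (j - m - 1, rUp ξ j v (k + 1) (j - m))

lemma sAux_step (ξ : ℤ × ℤ → ℤ) (j v : ℤ) (k : ℕ) (i : ℤ) (h : i ≤ j) :
    sAux ξ j v k (j - (i - 1)).toNat =
      sAux ξ j v k (j - i).toNat - ξ (i - 1, rUp ξ j v (k + 1) i) := by
  have h1 : (j - (i - 1)).toNat = (j - i).toNat + 1 := by omega
  rw [h1, sAux, show j - ((j - i).toNat : ℤ) = i from by omega]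

/-- The family of sets whose infima appear in the Skorokhod representation. -/
def Mset (j : ℤ) (g s : ℤ → ℤ) (i : ℤ) : Set ℤ :=
  {x : ℤ | ∃ l : ℤ, i ≤ l ∧ l ≤ j ∧ x = s l - g l - 1}

lemma Mset_finite (j : ℤ) (g s : ℤ → ℤ) (i : ℤ) : (Mset j g s i).Finite := by
  apply Set.Finite.subset ((Set.finite_Icc i j).image (fun l => s l - g l - 1))
  rintro x ⟨l, h1, h2, rfl⟩
  exact ⟨l, ⟨h1, h2⟩, rfl⟩

lemma Mset_nonempty (j : ℤ) (g s : ℤ → ℤ) (i : ℤ) (h : i ≤ j) :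
    (Mset j g s i).Nonempty := ⟨s i - g i - 1, i, le_refl i, h, rfl⟩

lemma Mset_step (j : ℤ) (g s : ℤ → ℤ) (i : ℤ) (h : i ≤ j) :
    Mset j g s (i - 1) = insert (s (i - 1) - g (i - 1) - 1) (Mset j g s i) := by
  ext x
  simp only [Set.mem_insert_iff, Mset, Set.mem_setOf_eq]
  constructor
  · rintro ⟨l, h1, h2, rfl⟩
    rcases eq_or_lt_of_le h1 with rfl | h1
    · exact Or.inl rfl
    · exact Or.inr ⟨l, by omega, h2, rfl⟩
  · rintro (rfl | ⟨l, h1, h2, rfl⟩)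
    · exact ⟨i - 1, le_refl _, by omega, rfl⟩
    · exact ⟨l, by omega, h2, rfl⟩

lemma sInf_Mset_step (j : ℤ) (g s : ℤ → ℤ) (i : ℤ) (h : i ≤ j) :
    sInf (Mset j g s (i - 1)) =
      min (s (i - 1) - g (i - 1) - 1) (sInf (Mset j g s i)) := by
  rw [Mset_step j g s i h]
  exact csInf_insert (Mset_finite j g s i).bddBelow (Mset_nonempty j g s i h)

end SkorokhodAux

open SkorokhodAux in
/-- for every sign configuration `ξ`, target time `j` and interval
`[u,v]` with `(j,u),(j,v) ∈ ℤ²ₑ`, and every `k ≥ 0`, there is a backward random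
walk `s` (with `±1` backward increments) such that the discrete Skorokhod
reflection representation
`r_{k+1}^+(i) = s(i) - min_{l ∈ {i,…,j}} ( s(l) - r_k^+(l+1) - 1 )`
holds for all `T_k ≤ i ≤ j`, with the convention `r_k^+(j+1) = v`. -/
theorem rUp_skorokhod_representation (ξ : ℤ × ℤ → ℤ)
    (hξ : ∀ z, ξ z = 1 ∨ ξ z = -1) (j u v : ℤ) (huv : u ≤ v)
    (hu : Even (j + u)) (hv : Even (j + v)) (k : ℕ) :
    ∃ s : ℤ → ℤ, (∀ i ≤ j, s (i - 1) - s i = 1 ∨ s (i - 1) - s i = -1) ∧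
      ∀ i : ℤ, Tmeet ξ j u v k ≤ i → i ≤ j →
        rUp ξ j v (k + 1) i =
          s i - sInf {x : ℤ | ∃ l : ℤ, i ≤ l ∧ l ≤ j ∧
            x = s l - (if l = j then v else rUp ξ j v k (l + 1)) - 1} := by
  classical
  set g : ℤ → ℤ := fun l => if l = j then v else rUp ξ j v k (l + 1) with hgdef
  set s : ℤ → ℤ := fun i => sAux ξ j v k (j - i).toNat with hsdef
  have hg : ∀ l, l ≤ j → Odd (g l + 1 + l) := by
    intro l hl
    rcases eq_or_lt_of_le hl with rfl | hl'
    · simp only [hgdef, if_pos rfl]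
      rcases hv with ⟨t, ht⟩
      exact ⟨t, by omega⟩
    · simp only [hgdef, if_neg (by omega : l ≠ j)]
      obtain ⟨t, ht⟩ := rUp_parity ξ hξ j v hv k (l + 1) (by omega)
      exact ⟨t, by omega⟩
  have hR : ∀ i : ℤ, rUp ξ j v (k + 1) i = sSup (Sset ξ j g i) := fun _ => rfl
  have hs_step : ∀ i : ℤ, i ≤ j → s (i - 1) = s i - ξ (i - 1, rUp ξ j v (k + 1) i) := by
    intro i hij
    simp only [hsdef]
    exact sAux_step ξ j v k i hij
  have hsj : s j = v + 1 := by
    simp only [hsdef, show (j - j).toNat = 0 from by omega, sAux]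
  -- the main claim by downward induction
  have claim : ∀ m : ℕ, rUp ξ j v (k + 1) (j - m) =
      s (j - m) - sInf (Mset j g s (j - m)) := by
    intro m
    induction m with
    | zero =>
      push_cast
      rw [sub_zero]
      have hS : Sset ξ j g j = {v + 1} := by
        ext x
        simp only [Sset, Set.mem_setOf_eq, Set.mem_singleton_iff]
        constructor
        · rintro ⟨l, h1, h2, rfl⟩
          have : l = j := le_antisymm h2 h1
          subst this
          rw [Yb_self]
          simp [hgdef]
        · rintro rfl
          exact ⟨j, le_refl _, le_refl _, by rw [Yb_self]; simp [hgdef]⟩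
      have hM : Mset j g s j = {s j - v - 1} := by
        ext x
        simp only [Mset, Set.mem_setOf_eq, Set.mem_singleton_iff]
        constructor
        · rintro ⟨l, h1, h2, rfl⟩
          have : l = j := le_antisymm h2 h1
          subst this
          simp [hgdef]
        · rintro rfl
          exact ⟨j, le_refl _, le_refl _, by simp [hgdef]⟩
      rw [hR, hS, hM, csSup_singleton, csInf_singleton, hsj]
      ring
    | succ m ih =>
      have hij : j - (m : ℤ) ≤ j := by omega
      set i : ℤ := j - (m : ℤ) with hidef
      have hjm1 : j - ((m : ℕ) + 1 : ℕ) = i - 1 := by push_cast; omega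
      rw [hjm1]
      have hsup : rUp ξ j v (k + 1) (i - 1) =
          max (g (i - 1) + 1)
            (rUp ξ j v (k + 1) i - ξ (i - 1, rUp ξ j v (k + 1) i)) := by
        rw [hR, hR, sSup_Sset_step ξ hξ j g hg i hij]
      have hinf := sInf_Mset_step j g s i hij
      have hstep := hs_step i hij
      rw [hsup, hinf, hstep]
      omega
  refine ⟨s, ?_, ?_⟩
  · intro i hij
    rw [hs_step i hij]
    rcases hξ (i - 1, rUp ξ j v (k + 1) i) with h1 | h1 <;> [right; left] <;> omega
  · intro i _ hij
    have := claim (j - i).toNat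
    rw [show j - ((j - i).toNat : ℤ) = i from by omega] at this
    exact this

end
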